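/- Let x_1,…,x_N be pairwise distinct complex numbers. Then there exists a constant C > 0, depending only on x_1,…,x_N, such that for all nonzero complex numbers a_1,…,a_N there exists δ_0 > 0 with the following property: whenever 0 < δ < δ_0 and δ_0',…,δ_{2N−1}' ∈ ℂ satisfy |δ_k'| < δ for k = 0,…,2N−1, there exist complex numbers x̃_1,…,x̃_N, ã_1,…,ã_N such that ∑_{j=1}^N ã_j·x̃_j^k = m_k + δ_k' for all k = 0,…,2N−1, where m_k = ∑_{j=1}^N a_j·x_j^k, and moreover |a_j − ã_j| ≤ C·δ and |x_j − x̃_j| ≤ C·|a_j|^{−1}·δ for every j = 1,…,N. -/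

import Mathlib

open Polynomial Finset

namespace Stmt7Aux

/-- The confluent Vandermonde linear map, depending only on the nodes `x`. -/
noncomputable def L {N : ℕ} (x : Fin N → ℂ) :
    ((Fin N → ℂ) × (Fin N → ℂ)) →ₗ[ℂ] (Fin (2 * N) → ℂ) where
  toFun p := fun i => ∑ j, (p.2 j * x j ^ (i : ℕ) + p.1 j * (i : ℕ) * x j ^ ((i : ℕ) - 1))
  map_add' p q := by
    funext i
    simp only [Pi.add_apply]
    rw [← Finset.sum_add_distrib]
    refine Finset.sum_congr rfl fun j _ => ?_
    simp only [Prod.fst_add, Prod.snd_add, Pi.add_apply]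
    ring
  map_smul' c p := by
    funext i
    simp only [RingHom.id_apply, Pi.smul_apply, smul_eq_mul, Finset.mul_sum]
    
    refine Finset.sum_congr rfl fun j _ => ?_
    simp only [Prod.smul_fst, Prod.smul_snd, Pi.smul_apply, smul_eq_mul]
    ring

lemma deriv_sq_eval (c : ℂ) (r : ℂ[X]) :
    eval c (derivative ((X - C c) ^ 2 * r)) = 0 := by
  simp [derivative_mul, derivative_X_sub_C_sq, sub_self]

lemma L_injective {N : ℕ} (x : Fin N → ℂ) (hx : Function.Injective x) :
    Function.Injective (L x) := by
  rw [injective_iff_map_eq_zero]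
  rintro ⟨v, b⟩ hp
  set S : ℂ[X] →ₗ[ℂ] ℂ :=
    ∑ j, (b j • Polynomial.leval (x j)
      + v j • (Polynomial.leval (x j)).comp Polynomial.derivative) with hSdef
  have hS : ∀ q : ℂ[X],
      S q = ∑ j, (b j * q.eval (x j) + v j * (derivative q).eval (x j)) := by
    intro q
    simp [hSdef, LinearMap.sum_apply, LinearMap.add_apply, LinearMap.smul_apply,
      leval_apply, smul_eq_mul]
  have hmono : ∀ n, n < 2 * N → S (X ^ n) = 0 := by
    intro n hn
    have h0 := congrFun hp ⟨n, hn⟩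
    simp only [L, LinearMap.coe_mk, AddHom.coe_mk, Pi.zero_apply] at h0
    rw [hS, ← h0]
    refine Finset.sum_congr rfl fun j _ => ?_
    simp [derivative_X_pow]
    ring
  have hdeg : ∀ q : ℂ[X], q.natDegree < 2 * N → S q = 0 := by
    intro q hq
    conv_lhs => rw [q.as_sum_range' (2 * N) hq]
    rw [map_sum]
    refine Finset.sum_eq_zero fun n hn => ?_
    rw [← Polynomial.smul_X_eq_monomial, map_smul, hmono n (Finset.mem_range.mp hn), smul_zero]
  set Q : Fin N → ℂ[X] := fun j => ∏ l ∈ univ.erase j, (X - C (x l)) ^ 2 with hQdef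
  have hQne : ∀ j, (Q j).eval (x j) ≠ 0 := by
    intro j
    simp only [hQdef, eval_prod, eval_pow, eval_sub, eval_X, eval_C]
    refine Finset.prod_ne_zero_iff.mpr fun l hl => ?_
    have hlj : x j ≠ x l := fun h => (Finset.mem_erase.mp hl).1 (hx h).symm
    exact pow_ne_zero _ (sub_ne_zero.mpr hlj)
  have hQ0 : ∀ j, Q j ≠ 0 := by
    intro j
    refine Finset.prod_ne_zero_iff.mpr fun l _ => pow_ne_zero _ (X_sub_C_ne_zero (x l))
  have hQdeg : ∀ j, (Q j).natDegree = 2 * (N - 1) := by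
    intro j
    rw [hQdef]
    rw [natDegree_prod _ _ fun l _ => pow_ne_zero _ (X_sub_C_ne_zero (x l))]
    simp only [natDegree_pow, natDegree_X_sub_C, mul_one, Finset.sum_const, smul_eq_mul]
    rw [Finset.card_erase_of_mem (mem_univ j), card_univ, Fintype.card_fin]
    ring
  have hQzero : ∀ j m, m ≠ j → (Q j).eval (x m) = 0 := by
    intro j m hmj
    simp only [hQdef, eval_prod]
    apply Finset.prod_eq_zero (Finset.mem_erase.mpr ⟨hmj, mem_univ m⟩)
    simp
  set P : Fin N → ℂ[X] := fun j => (X - C (x j)) * Q j with hPdef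
  have hPdeg : ∀ j, (P j).natDegree = 1 + 2 * (N - 1) := by
    intro j
    rw [hPdef]
    simp only
    rw [natDegree_mul (X_sub_C_ne_zero _) (hQ0 j), natDegree_X_sub_C, hQdeg]
  have hPeval : ∀ j m, (P j).eval (x m) = 0 := by
    intro j m
    by_cases h : m = j
    · subst h; simp [hPdef]
    · simp [hPdef, hQzero j m h]
  have hPderiv_ne : ∀ j m, m ≠ j → (derivative (P j)).eval (x m) = 0 := by
    intro j m hmj
    have hm : m ∈ univ.erase j := Finset.mem_erase.mpr ⟨hmj, mem_univ m⟩
    have hsplit : Q j = (X - C (x m)) ^ 2 * ∏ l ∈ (univ.erase j).erase m, (X - C (x l)) ^ 2 :=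
      (Finset.mul_prod_erase _ _ hm).symm
    have hPm : P j = (X - C (x m)) ^ 2
        * ((X - C (x j)) * ∏ l ∈ (univ.erase j).erase m, (X - C (x l)) ^ 2) := by
      rw [hPdef]; simp only; rw [hsplit]; ring
    rw [hPm]
    exact deriv_sq_eval _ _
  have hPderiv_j : ∀ j, (derivative (P j)).eval (x j) = (Q j).eval (x j) := by
    intro j
    rw [hPdef]
    simp [derivative_mul, derivative_X_sub_C]
  have hv0 : ∀ j, v j = 0 := by
    intro j
    have h1 := hdeg (P j) (by rw [hPdeg]; have := Fin.pos j; omega)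
    rw [hS] at h1
    rw [Finset.sum_eq_single j
      (fun m _ hmj => by rw [hPeval j m, hPderiv_ne j m hmj]; ring)
      (fun h => absurd (mem_univ j) h)] at h1
    rw [hPeval j j, hPderiv_j j] at h1
    simp only [mul_zero, zero_add] at h1
    exact (mul_eq_zero.mp h1).resolve_right (hQne j)
  have hb0 : ∀ j, b j = 0 := by
    intro j
    have h1 := hdeg (Q j) (by rw [hQdeg]; have := Fin.pos j; omega)
    rw [hS] at h1
    rw [Finset.sum_eq_single j
      (fun m _ hmj => by rw [hQzero j m hmj, hv0 m]; ring)
      (fun h => absurd (mem_univ j) h)] at h1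
    rw [hv0 j] at h1
    simp only [zero_mul, add_zero] at h1
    exact (mul_eq_zero.mp h1).resolve_right (hQne j)
  exact Prod.mk_eq_zero.mpr ⟨funext hv0, funext hb0⟩

lemma L_bijective {N : ℕ} (x : Fin N → ℂ) (hx : Function.Injective x) :
    Function.Bijective (L x) := by
  have hinj := L_injective x hx
  have hrank : Module.finrank ℂ ((Fin N → ℂ) × (Fin N → ℂ))
      = Module.finrank ℂ (Fin (2 * N) → ℂ) := by
    simp [Module.finrank_prod, Module.finrank_pi]
    ring
  exact ⟨hinj, (LinearMap.injective_iff_surjective_of_finrank_eq_finrank hrank).mp hinj⟩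

end Stmt7Aux

open Metric
open scoped Topology

namespace Stmt7Aux

lemma L_apply {N : ℕ} (x : Fin N → ℂ) (p : (Fin N → ℂ) × (Fin N → ℂ)) (i : Fin (2 * N)) :
    L x p i = ∑ j, (p.2 j * x j ^ (i : ℕ) + p.1 j * (i : ℕ) * x j ^ ((i : ℕ) - 1)) := rfl

/-- The rescaled Prony map. -/
noncomputable def Fm {N : ℕ} (x a : Fin N → ℂ) :
    ((Fin N → ℂ) × (Fin N → ℂ)) → (Fin (2 * N) → ℂ) :=
  fun p i => ∑ j, (a j + p.2 j) * (x j + p.1 j * (a j)⁻¹) ^ (i : ℕ)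

lemma hasStrictFDerivAt_Fm {N : ℕ} (x a : Fin N → ℂ) (ha : ∀ j, a j ≠ 0)
    (e : ((Fin N → ℂ) × (Fin N → ℂ)) ≃L[ℂ] (Fin (2 * N) → ℂ))
    (he : ∀ p, e p = L x p) :
    HasStrictFDerivAt (Fm x a) (e : ((Fin N → ℂ) × (Fin N → ℂ)) →L[ℂ] (Fin (2 * N) → ℂ)) 0 := by
  rw [hasStrictFDerivAt_pi']
  intro i
  simp only [Fm]
  refine HasStrictFDerivAt.congr_fderiv
    (HasStrictFDerivAt.fun_sum fun j (_ : j ∈ Finset.univ) =>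
      HasStrictFDerivAt.mul
        (((hasStrictFDerivAt_apply (𝕜 := ℂ) j ((0 : (Fin N → ℂ) × (Fin N → ℂ)).2)).comp
            (0 : (Fin N → ℂ) × (Fin N → ℂ))
            (hasStrictFDerivAt_snd (𝕜 := ℂ) (p := (0 : (Fin N → ℂ) × (Fin N → ℂ))))).const_add
          (a j))
        ((hasStrictDerivAt_pow (i : ℕ) (x j)).comp_hasStrictFDerivAt_of_eq 0
          ((((hasStrictFDerivAt_apply (𝕜 := ℂ) j ((0 : (Fin N → ℂ) × (Fin N → ℂ)).1)).comp
              (0 : (Fin N → ℂ) × (Fin N → ℂ))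
              (hasStrictFDerivAt_fst (𝕜 := ℂ)
                (p := (0 : (Fin N → ℂ) × (Fin N → ℂ))))).mul_const
            ((a j)⁻¹)).const_add (x j))
          (by simp))) ?_
  ext p <;>
    simp only [ContinuousLinearMap.comp_apply, ContinuousLinearMap.inl_apply,
      ContinuousLinearMap.inr_apply, ContinuousLinearMap.coe_sum', Finset.sum_apply,
      ContinuousLinearMap.add_apply, ContinuousLinearMap.coe_smul', Pi.smul_apply,
      ContinuousLinearMap.coe_comp', Function.comp_apply, ContinuousLinearMap.proj_apply,
      ContinuousLinearMap.coe_fst',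
      ContinuousLinearMap.coe_snd', smul_eq_mul, ContinuousLinearEquiv.coe_coe, he, L_apply,
      Prod.fst_zero, Prod.snd_zero, Pi.zero_apply,
      zero_mul, add_zero, mul_zero, zero_add] <;>
    refine Finset.sum_congr rfl fun j _ => ?_
  · linear_combination ((i : ℕ) : ℂ) * x j ^ ((i : ℕ) - 1) * p j * mul_inv_cancel₀ (ha j)
  · ring

end Stmt7Aux

open Stmt7Aux

/-- Local Lipschitz-type stability of the inverse Prony map: for pairwise distinct nodes
`x_1,…,x_N` there is a constant `C`, depending only on the nodes, such that for nonzero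
amplitudes `a_1,…,a_N` and all sufficiently small perturbations of the moments
`m_k = ∑_j a_j x_j^k`, `k = 0,…,2N-1`, the perturbed Prony system has a solution whose
parameters deviate from the original ones by at most `Cδ` (amplitudes) and
`C|a_j|⁻¹δ` (nodes). -/
theorem stmt7
    (N : ℕ) (x : Fin N → ℂ) (hx : Function.Injective x) :
    ∃ C > (0 : ℝ), ∀ a : Fin N → ℂ, (∀ j, a j ≠ 0) →
      ∃ δ0 > (0 : ℝ), ∀ δ : ℝ, 0 < δ → δ < δ0 →
        ∀ δ' : Fin (2 * N) → ℂ, (∀ i, ‖δ' i‖ < δ) →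
          ∃ (tx ta : Fin N → ℂ),
            (∀ i : Fin (2 * N),
              ∑ j, ta j * tx j ^ (i : ℕ) = (∑ j, a j * x j ^ (i : ℕ)) + δ' i) ∧
            ∀ j, ‖a j - ta j‖ ≤ C * δ ∧
              ‖x j - tx j‖ ≤ C * ‖a j‖⁻¹ * δ := by
  classical
  -- the continuous linear equivalence given by the confluent Vandermonde map
  let e : ((Fin N → ℂ) × (Fin N → ℂ)) ≃L[ℂ] (Fin (2 * N) → ℂ) :=
    (LinearEquiv.ofBijective (L x) (L_bijective x hx)).toContinuousLinearEquiv
  have he : ∀ p, e p = L x p := fun p => rfl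
  set T : (Fin (2 * N) → ℂ) →L[ℂ] ((Fin N → ℂ) × (Fin N → ℂ)) :=
    (e.symm : (Fin (2 * N) → ℂ) →L[ℂ] ((Fin N → ℂ) × (Fin N → ℂ))) with hT
  set K : NNReal := ‖T‖₊ + 1 with hK
  refine ⟨(K : ℝ), by positivity, ?_⟩
  intro a ha
  have hF : HasStrictFDerivAt (Fm x a)
      (e : ((Fin N → ℂ) × (Fin N → ℂ)) →L[ℂ] (Fin (2 * N) → ℂ)) 0 :=
    hasStrictFDerivAt_Fm x a ha e he
  set g : (Fin (2 * N) → ℂ) → ((Fin N → ℂ) × (Fin N → ℂ)) :=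
    hF.localInverse (Fm x a) e 0 with hg
  have hginv : HasStrictFDerivAt g T (Fm x a 0) := hF.to_localInverse
  obtain ⟨s, hs, hlip⟩ := hginv.exists_lipschitzOnWith_of_nnnorm_lt K (by
    rw [hK]; exact lt_add_of_pos_right _ one_pos)
  have hri : {z | Fm x a (g z) = z} ∈ nhds (Fm x a 0) := hF.eventually_right_inverse
  obtain ⟨r, hr0, hball⟩ := Metric.mem_nhds_iff.mp (Filter.inter_mem hs hri)
  refine ⟨r, hr0, ?_⟩
  intro δ hδ hδr δ' hδ'
  set y : Fin (2 * N) → ℂ := fun i => (∑ j, a j * x j ^ (i : ℕ)) + δ' i with hy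
  have hFm0 : Fm x a 0 = fun i : Fin (2 * N) => ∑ j, a j * x j ^ (i : ℕ) := by
    funext i
    simp [Fm]
  have hdy : dist y (Fm x a 0) ≤ δ := by
    rw [dist_eq_norm, show y - Fm x a 0 = δ' from by funext i; simp [hy, hFm0, Pi.sub_apply]]
    exact (pi_norm_le_iff_of_nonneg hδ.le).mpr fun i => by
      simpa using (hδ' i).le
  have hymem : y ∈ Metric.ball (Fm x a 0) r := by
    exact Metric.mem_ball.mpr (lt_of_le_of_lt hdy hδr)
  have hys : y ∈ s := (hball hymem).1
  have hyF : Fm x a (g y) = y := (hball hymem).2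
  have hy0s : Fm x a 0 ∈ s := mem_of_mem_nhds hs
  have hgnorm : ‖g y‖ ≤ (K : ℝ) * δ := by
    have h1 : dist (g y) (g (Fm x a 0)) ≤ (K : ℝ) * dist y (Fm x a 0) :=
      hlip.dist_le_mul y hys (Fm x a 0) hy0s
    have hg0 : g (Fm x a 0) = 0 := hF.localInverse_apply_image
    rw [hg0, dist_zero_right] at h1
    calc ‖g y‖ ≤ (K : ℝ) * dist y (Fm x a 0) := h1
      _ ≤ (K : ℝ) * δ := by
          exact mul_le_mul_of_nonneg_left hdy (K.coe_nonneg)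
  have hfst : ∀ j, ‖(g y).1 j‖ ≤ (K : ℝ) * δ := fun j =>
    le_trans (le_trans (norm_le_pi_norm (g y).1 j) (norm_fst_le (g y))) hgnorm
  have hsnd : ∀ j, ‖(g y).2 j‖ ≤ (K : ℝ) * δ := fun j =>
    le_trans (le_trans (norm_le_pi_norm (g y).2 j) (norm_snd_le (g y))) hgnorm
  refine ⟨fun j => x j + (g y).1 j * (a j)⁻¹, fun j => a j + (g y).2 j, ?_, ?_⟩
  · intro i
    have h := congrFun hyF i
    simp only [Fm, hy] at h
    simpa using h
  · intro j
    constructor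
    · rw [show a j - (a j + (g y).2 j) = -((g y).2 j) from by ring, norm_neg]
      exact hsnd j
    · rw [show x j - (x j + (g y).1 j * (a j)⁻¹) = -((g y).1 j * (a j)⁻¹) from by ring,
        norm_neg, norm_mul, norm_inv]
      calc ‖(g y).1 j‖ * ‖a j‖⁻¹
          ≤ ((K : ℝ) * δ) * ‖a j‖⁻¹ := by
            exact mul_le_mul_of_nonneg_right (hfst j) (by positivity)
        _ = (K : ℝ) * ‖a j‖⁻¹ * δ := by ring
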